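/- arXiv:2101.02824 — 4 statements merged into one kernel-verified Lean document; each statement's English description precedes it below -/
import Mathlib

section
/- Let Y, Z : Ω → E be measurable random vectors on a probability space (Ω, μ) such that Y and Z are independent, Y is integrable with E[Y] = x, and Z is square-integrable with E[Z] = x + ε for some fixed vectors x, ε ∈ E. Let f : E → E be measurable with f ∘ Y square-integrable, and set σ² := E[‖Z − x‖²]. Then E[‖f(Y) − x‖²] = E[‖f(Y) − Z‖²] − σ² + 2⟨ε, E[f(Y)] − x⟩. -/
open MeasureTheory ProbabilityTheory
open scoped RealInnerProductSpace

section Aux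

variable {Ω : Type*} [MeasurableSpace Ω] {μ : Measure Ω} [IsProbabilityMeasure μ] {d : ℕ}

lemma aux_integrable_norm_sq {A : Ω → EuclideanSpace ℝ (Fin d)} (hA : MemLp A 2 μ) :
    Integrable (fun ω => ‖A ω‖ ^ 2) μ := by
  have h := hA.integrable_norm_rpow (by norm_num) (by norm_num)
  simpa [ENNReal.toReal_ofNat, Real.rpow_natCast] using h

lemma aux_integral_inner_indep {A B : Ω → EuclideanSpace ℝ (Fin d)}
    (hAB : IndepFun A B μ) (hAm : Measurable A) (hBm : Measurable B)
    (hA : Integrable A μ) (hB : Integrable B μ) :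
    (Integrable (fun ω => ⟪A ω, B ω⟫) μ) ∧
      ∫ ω, ⟪A ω, B ω⟫ ∂μ = ⟪∫ ω, A ω ∂μ, ∫ ω, B ω ∂μ⟫ := by
  have hproj : ∀ i : Fin d, Measurable fun v : EuclideanSpace ℝ (Fin d) => v i := fun i =>
    (EuclideanSpace.proj (𝕜 := ℝ) i).measurable
  have hindi : ∀ i : Fin d, IndepFun (fun ω => A ω i) (fun ω => B ω i) μ := fun i =>
    hAB.comp (hproj i) (hproj i)
  have hAi : ∀ i : Fin d, Integrable (fun ω => A ω i) μ := fun i =>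
    (EuclideanSpace.proj (𝕜 := ℝ) i).integrable_comp hA
  have hBi : ∀ i : Fin d, Integrable (fun ω => B ω i) μ := fun i =>
    (EuclideanSpace.proj (𝕜 := ℝ) i).integrable_comp hB
  have hmul : ∀ i : Fin d, Integrable (fun ω => A ω i * B ω i) μ := fun i =>
    (hindi i).integrable_mul (hAi i) (hBi i)
  have hintAi : ∀ i : Fin d, ∫ ω, A ω i ∂μ = (∫ ω, A ω ∂μ) i := fun i => by
    simpa using ((EuclideanSpace.proj (𝕜 := ℝ) i).integral_comp_comm hA).symm.symm
  have hintBi : ∀ i : Fin d, ∫ ω, B ω i ∂μ = (∫ ω, B ω ∂μ) i := fun i =>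
    (EuclideanSpace.proj (𝕜 := ℝ) i).integral_comp_comm hB
  constructor
  · have : Integrable (fun ω => ∑ i, A ω i * B ω i) μ :=
      integrable_finset_sum _ fun i _ => hmul i
    simpa [PiLp.inner_apply, RCLike.inner_apply, mul_comm] using this
  · simp only [PiLp.inner_apply, RCLike.inner_apply, starRingEnd_apply, star_trivial]
    simp_rw [mul_comm ((B _).ofLp _) ((A _).ofLp _), mul_comm ((∫ ω, B ω ∂μ).ofLp _)]
    rw [integral_finset_sum _ fun i _ => hmul i]
    refine Finset.sum_congr rfl fun i _ => ?_
    have h := (hindi i).integral_mul_eq_mul_integral (hAi i).aestronglyMeasurable (hBi i).aestronglyMeasurable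
    rw [← hintAi i, ← hintBi i]
    simpa [Pi.mul_apply] using h

end Aux

/-- **Theorem 1 (conditional form, fixed ground truth `x`).**
If `Y` and `Z` are independent random vectors with `E[Y] = x` and `E[Z] = x + ε`,
`Z` and `f ∘ Y` square-integrable, then
`E[‖f(Y) − x‖²] = E[‖f(Y) − Z‖²] − E[‖Z − x‖²] + 2⟨ε, E[f(Y)] − x⟩`. -/
theorem neighbor2neighbor_theorem1_fixed_gt
    {Ω : Type*} [MeasurableSpace Ω] (μ : Measure Ω) [IsProbabilityMeasure μ]
    {d : ℕ} (Y Z : Ω → EuclideanSpace ℝ (Fin d)) (x ε : EuclideanSpace ℝ (Fin d))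
    (hY : Measurable Y) (hZ : Measurable Z)
    (hInd : IndepFun Y Z μ)
    (hYint : Integrable Y μ) (hEY : ∫ ω, Y ω ∂μ = x)
    (hZsq : MemLp Z 2 μ) (hEZ : ∫ ω, Z ω ∂μ = x + ε)
    (f : EuclideanSpace ℝ (Fin d) → EuclideanSpace ℝ (Fin d))
    (hf : Measurable f) (hfY : MemLp (fun ω => f (Y ω)) 2 μ) :
    ∫ ω, ‖f (Y ω) - x‖ ^ 2 ∂μ
      = ∫ ω, ‖f (Y ω) - Z ω‖ ^ 2 ∂μ - ∫ ω, ‖Z ω - x‖ ^ 2 ∂μ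
        + 2 * ⟪ε, (∫ ω, f (Y ω) ∂μ) - x⟫ := by
  set A : Ω → EuclideanSpace ℝ (Fin d) := fun ω => f (Y ω) - x with hAdef
  set B : Ω → EuclideanSpace ℝ (Fin d) := fun ω => Z ω - x with hBdef
  have hAm : Measurable A := (hf.comp hY).sub measurable_const
  have hBm : Measurable B := hZ.sub measurable_const
  have hAsq : MemLp A 2 μ := hfY.sub (memLp_const x)
  have hBsq : MemLp B 2 μ := hZsq.sub (memLp_const x)
  have hAint : Integrable A μ := hAsq.integrable (by norm_num)
  have hBint : Integrable B μ := hBsq.integrable (by norm_num)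
  have hABind : IndepFun A B μ :=
    hInd.comp (hf.sub measurable_const) (measurable_id.sub measurable_const)
  obtain ⟨hinner_int, hinner_eq⟩ := aux_integral_inner_indep hABind hAm hBm hAint hBint
  have hA2 : Integrable (fun ω => ‖A ω‖ ^ 2) μ := aux_integrable_norm_sq hAsq
  have hB2 : Integrable (fun ω => ‖B ω‖ ^ 2) μ := aux_integrable_norm_sq hBsq
  have hEA : ∫ ω, A ω ∂μ = (∫ ω, f (Y ω) ∂μ) - x := by
    rw [hAdef, integral_sub (hfY.integrable (by norm_num)) (integrable_const x),
      integral_const]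
    simp
  have hEB : ∫ ω, B ω ∂μ = ε := by
    rw [hBdef, integral_sub (hZsq.integrable (by norm_num)) (integrable_const x),
      integral_const, hEZ]
    simp
  have key : ∫ ω, ‖f (Y ω) - Z ω‖ ^ 2 ∂μ
      = ∫ ω, ‖A ω‖ ^ 2 ∂μ - 2 * ⟪(∫ ω, f (Y ω) ∂μ) - x, ε⟫ + ∫ ω, ‖B ω‖ ^ 2 ∂μ := by
    have hpt : ∀ ω, ‖f (Y ω) - Z ω‖ ^ 2 = ‖A ω‖ ^ 2 - 2 * ⟪A ω, B ω⟫ + ‖B ω‖ ^ 2 := by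
      intro ω
      have h : f (Y ω) - Z ω = A ω - B ω := (sub_sub_sub_cancel_right _ _ x).symm
      rw [h, @norm_sub_sq_real]
    simp_rw [hpt]
    have hsub : Integrable (fun ω => ‖A ω‖ ^ 2 - 2 * ⟪A ω, B ω⟫) μ :=
      hA2.sub (hinner_int.const_mul 2)
    have hcm : Integrable (fun ω => 2 * ⟪A ω, B ω⟫) μ := hinner_int.const_mul 2
    rw [integral_add hsub hB2, integral_sub hA2 hcm, integral_const_mul, hinner_eq, hEA, hEB]
  have hgoalA : ∫ ω, ‖f (Y ω) - x‖ ^ 2 ∂μ = ∫ ω, ‖A ω‖ ^ 2 ∂μ := rfl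
  have hgoalB : ∫ ω, ‖Z ω - x‖ ^ 2 ∂μ = ∫ ω, ‖B ω‖ ^ 2 ∂μ := rfl
  rw [hgoalA, hgoalB, key, real_inner_comm ε ((∫ ω, f (Y ω) ∂μ) - x)]
  ring
end

section
/- Let Ω be a standard Borel probability space and X, Y, Z : Ω → E measurable random vectors such that Y and Z are conditionally independent given the σ-algebra generated by X, Y is square-integrable with conditional expectation E[Y | σ(X)] = X almost surely, and Z is square-integrable with E[Z | σ(X)] = X + ε almost surely for a fixed (deterministic) vector ε ∈ E. Let f : E → E be measurable with f ∘ Y square-integrable. Then E[‖f(Y) − X‖²] = E[‖f(Y) − Z‖²] − E[‖Z − X‖²] + 2⟨ε, E[f(Y) − X]⟩. -/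
open MeasureTheory ProbabilityTheory
open scoped RealInnerProductSpace

section N2NAux

variable {α : Type*} {m m0 : MeasurableSpace α} {μ : Measure α}

lemma n2n_integrable_mul [IsFiniteMeasure μ] {a b : α → ℝ}
    (ha : MemLp a 2 μ) (hb : MemLp b 2 μ) :
    Integrable (fun ω => a ω * b ω) μ := by
  have h : MemLp (a • b) 1 μ := hb.smul ha (hpqr := ⟨by rw [ENNReal.inv_two_add_inv_two, inv_one]⟩)
  have := memLp_one_iff_integrable.mp h
  exact this

lemma n2n_integrable_inner {E : Type*} [NormedAddCommGroup E] [InnerProductSpace ℝ E]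
    [IsFiniteMeasure μ] {a b : α → E} (ha : MemLp a 2 μ) (hb : MemLp b 2 μ) :
    Integrable (fun ω => ⟪a ω, b ω⟫) μ := by
  refine (n2n_integrable_mul ha.norm hb.norm).mono' (ha.1.inner hb.1) ?_
  exact Filter.Eventually.of_forall fun ω => norm_inner_le_norm _ _

lemma n2n_condexp_clm {E F : Type*} [NormedAddCommGroup E] [NormedSpace ℝ E] [CompleteSpace E]
    [NormedAddCommGroup F] [NormedSpace ℝ F] [CompleteSpace F]
    (hm : m ≤ m0) [SigmaFinite (μ.trim hm)]
    (T : E →L[ℝ] F) {g : α → E} (hg : Integrable g μ) :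
    μ[fun ω => T (g ω)|m] =ᵐ[μ] fun ω => T ((μ[g|m]) ω) := by
  refine (ae_eq_condExp_of_forall_setIntegral_eq hm (T.integrable_comp hg) ?_ ?_ ?_).symm
  · exact fun s _ _ => (T.integrable_comp integrable_condExp).integrableOn
  · intro s hs hμs
    rw [T.integral_comp_comm integrable_condExp.integrableOn,
      T.integral_comp_comm hg.integrableOn, setIntegral_condExp hm hg hs]
  · exact (T.continuous.comp_stronglyMeasurable stronglyMeasurable_condExp).aestronglyMeasurable

lemma n2n_memℒp_two_condexp {E : Type*} [NormedAddCommGroup E] [InnerProductSpace ℝ E]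
    [CompleteSpace E] (hm : m ≤ m0) [IsFiniteMeasure μ]
    {g : α → E} (hg : MemLp g 2 μ) : MemLp (μ[g|m]) 2 μ := by
  haveI : SigmaFinite (μ.trim hm) := inferInstance
  have h : (↑↑↑((condExpL2 E ℝ hm) (hg.toLp g)) : α → E) =ᵐ[μ] μ[g|m] := by
    refine ae_eq_condExp_of_forall_setIntegral_eq hm (hg.integrable one_le_two) ?_ ?_ ?_
    · exact fun s _ _ => (integrable_condExpL2_of_isFiniteMeasure hm).integrableOn
    · intro s hs hμs
      rw [integral_condExpL2_eq hm (hg.toLp g) hs hμs.ne]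
      exact setIntegral_congr_ae (hm s hs) ((hg.coeFn_toLp).mono fun ω hω _ => hω)
    · exact aestronglyMeasurable_condExpL2 hm _
  exact (Lp.memLp _).ae_eq h

lemma n2n_ae_indepFun {Ω : Type*} {m : MeasurableSpace Ω} [mΩ : MeasurableSpace Ω]
    [StandardBorelSpace Ω] [Nonempty Ω]
    (hm : m ≤ mΩ) (μ : Measure Ω) [IsProbabilityMeasure μ]
    {u v : Ω → ℝ} (hu : Measurable u) (hv : Measurable v)
    (huv : Kernel.IndepFun u v (condExpKernel μ m) (μ.trim hm)) :
    ∀ᵐ ω ∂μ, IndepFun u v ((condExpKernel μ m) ω) := by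
  have h := Kernel.indepFun_iff_measure_inter_preimage_eq_mul.mp huv
  have h' : ∀ᵐ ω ∂μ, ∀ q r : ℚ,
      (condExpKernel μ m) ω (u ⁻¹' Set.Iic (q : ℝ) ∩ v ⁻¹' Set.Iic (r : ℝ))
        = (condExpKernel μ m) ω (u ⁻¹' Set.Iic (q : ℝ))
          * (condExpKernel μ m) ω (v ⁻¹' Set.Iic (r : ℝ)) := by
    rw [ae_all_iff]
    intro q
    rw [ae_all_iff]
    intro r
    exact ae_of_ae_trim hm (h _ _ measurableSet_Iic measurableSet_Iic)
  have hpi : IsPiSystem (Set.range fun q : ℚ => Set.Iic (q : ℝ)) := by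
    rintro _ ⟨q, rfl⟩ _ ⟨r, rfl⟩ -
    exact ⟨min q r, by simp [Set.Iic_inter_Iic, Rat.cast_min]⟩
  have hgen : (inferInstance : MeasurableSpace ℝ)
      = MeasurableSpace.generateFrom (Set.range fun q : ℚ => Set.Iic (q : ℝ)) := by
    rw [BorelSpace.measurable_eq (α := ℝ), Real.borel_eq_generateFrom_Iic_rat,
      Set.iUnion_singleton_eq_range]
  filter_upwards [h'] with ω hω
  haveI : IsProbabilityMeasure ((condExpKernel μ m) ω) := inferInstance
  have hind : Indep (MeasurableSpace.comap u inferInstance)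
      (MeasurableSpace.comap v inferInstance) ((condExpKernel μ m) ω) := by
    refine IndepSets.indep hu.comap_le hv.comap_le (hpi.comap u) (hpi.comap v) ?_ ?_ ?_
    · rw [hgen, MeasurableSpace.comap_generateFrom]; rfl
    · rw [hgen, MeasurableSpace.comap_generateFrom]; rfl
    · rw [IndepSets_iff]
      rintro t1 t2 ⟨_, ⟨q, rfl⟩, rfl⟩ ⟨_, ⟨r, rfl⟩, rfl⟩
      exact hω q r
  exact hind

end N2NAux

/-- **Theorem 1 (full, unconditional-expectation form).**
If `Y` and `Z` are conditionally independent given `σ(X)`, with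
`E[Y | σ(X)] = X` a.s. and `E[Z | σ(X)] = X + ε` a.s., and `Y`, `Z`, `f ∘ Y` are
square-integrable, then
`E[‖f(Y) − X‖²] = E[‖f(Y) − Z‖²] − E[‖Z − X‖²] + 2⟨ε, E[f(Y) − X]⟩`. -/
theorem neighbor2neighbor_theorem1_full
    {Ω : Type*} [MeasurableSpace Ω] [StandardBorelSpace Ω] [Nonempty Ω]
    (μ : Measure Ω) [IsProbabilityMeasure μ]
    {d : ℕ} (X Y Z : Ω → EuclideanSpace ℝ (Fin d)) (ε : EuclideanSpace ℝ (Fin d))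
    (hX : Measurable X) (hY : Measurable Y) (hZ : Measurable Z)
    (hCondInd : CondIndepFun (MeasurableSpace.comap X inferInstance) hX.comap_le Y Z μ)
    (hYsq : MemLp Y 2 μ)
    (hEY : μ[Y | MeasurableSpace.comap X inferInstance] =ᵐ[μ] X)
    (hZsq : MemLp Z 2 μ)
    (hEZ : μ[Z | MeasurableSpace.comap X inferInstance] =ᵐ[μ] fun ω => X ω + ε)
    (f : EuclideanSpace ℝ (Fin d) → EuclideanSpace ℝ (Fin d))
    (hf : Measurable f) (hfY : MemLp (fun ω => f (Y ω)) 2 μ) :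
    ∫ ω, ‖f (Y ω) - X ω‖ ^ 2 ∂μ
      = ∫ ω, ‖f (Y ω) - Z ω‖ ^ 2 ∂μ - ∫ ω, ‖Z ω - X ω‖ ^ 2 ∂μ
        + 2 * ⟪ε, ∫ ω, (f (Y ω) - X ω) ∂μ⟫ := by
  classical
  haveI hσ : SigmaFinite (μ.trim hX.comap_le) := inferInstance
  have hXm : Measurable[MeasurableSpace.comap X inferInstance] X := fun _ ht => ⟨_, ht, rfl⟩
  have hX2 : MemLp X 2 μ := (n2n_memℒp_two_condexp hX.comap_le hYsq).ae_eq hEY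
  set G : Ω → EuclideanSpace ℝ (Fin d) :=
    μ[(fun ω => f (Y ω)) | MeasurableSpace.comap X inferInstance] with hGdef
  have hG2 : MemLp G 2 μ := n2n_memℒp_two_condexp hX.comap_le hfY
  -- coordinate MemLp facts
  have hU2 : ∀ i : Fin d, MemLp (fun ω => f (Y ω) i) 2 μ := fun i => by
    simpa [Function.comp_def] using (EuclideanSpace.proj (𝕜 := ℝ) i).comp_memLp' hfY
  have hV2 : ∀ i : Fin d, MemLp (fun ω => Z ω i) 2 μ := fun i => by
    simpa [Function.comp_def] using (EuclideanSpace.proj (𝕜 := ℝ) i).comp_memLp' hZsq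
  have hXc2 : ∀ i : Fin d, MemLp (fun ω => X ω i) 2 μ := fun i => by
    simpa [Function.comp_def] using (EuclideanSpace.proj (𝕜 := ℝ) i).comp_memLp' hX2
  have hGc2 : ∀ i : Fin d, MemLp (fun ω => G ω i) 2 μ := fun i => by
    simpa [Function.comp_def] using (EuclideanSpace.proj (𝕜 := ℝ) i).comp_memLp' hG2
  have hUi : ∀ i : Fin d, Integrable (fun ω => f (Y ω) i) μ :=
    fun i => (hU2 i).integrable one_le_two
  have hVi : ∀ i : Fin d, Integrable (fun ω => Z ω i) μ :=
    fun i => (hV2 i).integrable one_le_two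
  have hXci : ∀ i : Fin d, Integrable (fun ω => X ω i) μ :=
    fun i => (hXc2 i).integrable one_le_two
  have hGci : ∀ i : Fin d, Integrable (fun ω => G ω i) μ :=
    fun i => (hGc2 i).integrable one_le_two
  -- conditional expectations of coordinates
  have hgU : ∀ i : Fin d,
      μ[(fun ω => f (Y ω) i) | MeasurableSpace.comap X inferInstance] =ᵐ[μ]
        fun ω => G ω i := fun i => by
    have h := n2n_condexp_clm hX.comap_le (EuclideanSpace.proj (𝕜 := ℝ) i)
      (hfY.integrable one_le_two)
    simpa using h
  have hgZ : ∀ i : Fin d,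
      μ[(fun ω => Z ω i) | MeasurableSpace.comap X inferInstance] =ᵐ[μ]
        fun ω => X ω i + ε i := fun i => by
    have h := n2n_condexp_clm hX.comap_le (EuclideanSpace.proj (𝕜 := ℝ) i)
      (hZsq.integrable one_le_two)
    have h2 : μ[(fun ω => Z ω i) | MeasurableSpace.comap X inferInstance] =ᵐ[μ]
        fun ω => (μ[Z | MeasurableSpace.comap X inferInstance]) ω i := by simpa using h
    filter_upwards [h2, hEZ] with ω e1 e2
    rw [e1, e2]
    simp [PiLp.add_apply]
  -- conditional independence of coordinates, a.e. under the kernel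
  have hind : ∀ i : Fin d, ∀ᵐ ω ∂μ,
      IndepFun (fun ω' => f (Y ω') i) (fun ω' => Z ω' i)
        ((condExpKernel μ (MeasurableSpace.comap X inferInstance)) ω) := by
    intro i
    refine n2n_ae_indepFun hX.comap_le μ
      ((measurable_pi_apply i).comp ((WithLp.measurable_ofLp _ _).comp (hf.comp hY))) ((measurable_pi_apply i).comp ((WithLp.measurable_ofLp _ _).comp hZ)) ?_
    exact Kernel.IndepFun.comp hCondInd
      ((measurable_pi_apply i).comp ((WithLp.measurable_ofLp _ _).comp hf)) ((measurable_pi_apply i).comp (WithLp.measurable_ofLp _ _))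
  -- three integral identities per coordinate
  have k1 : ∀ i : Fin d, ∫ ω, f (Y ω) i * Z ω i ∂μ
      = ∫ ω, G ω i * (X ω i + ε i) ∂μ := by
    intro i
    have hcond : μ[(fun ω => f (Y ω) i * Z ω i) | MeasurableSpace.comap X inferInstance]
        =ᵐ[μ] fun ω => G ω i * (X ω i + ε i) := by
      have h1 := condExp_ae_eq_integral_condExpKernel hX.comap_le
        (n2n_integrable_mul (hU2 i) (hV2 i))
      have h2 := condExp_ae_eq_integral_condExpKernel hX.comap_le (hUi i)
      have h3 := condExp_ae_eq_integral_condExpKernel hX.comap_le (hVi i)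
      filter_upwards [h1, h2, h3, hind i, hgU i, hgZ i] with ω e1 e2 e3 eind egU egZ
      have hmul : ∫ y, f (Y y) i * Z y i
            ∂((condExpKernel μ (MeasurableSpace.comap X inferInstance)) ω)
          = (∫ y, f (Y y) i ∂((condExpKernel μ (MeasurableSpace.comap X inferInstance)) ω))
            * ∫ y, Z y i ∂((condExpKernel μ (MeasurableSpace.comap X inferInstance)) ω) :=
        eind.integral_mul_eq_mul_integral ((measurable_pi_apply i).comp ((WithLp.measurable_ofLp _ _).comp (hf.comp hY))).aestronglyMeasurable
          ((measurable_pi_apply i).comp ((WithLp.measurable_ofLp _ _).comp hZ)).aestronglyMeasurable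
      rw [e1, hmul, ← e2, ← e3, egU, egZ]
    calc ∫ ω, f (Y ω) i * Z ω i ∂μ
        = ∫ ω, (μ[(fun ω => f (Y ω) i * Z ω i) |
            MeasurableSpace.comap X inferInstance]) ω ∂μ :=
          (integral_condExp hX.comap_le).symm
      _ = ∫ ω, G ω i * (X ω i + ε i) ∂μ := integral_congr_ae hcond
  have hXsm : ∀ i : Fin d,
      StronglyMeasurable[MeasurableSpace.comap X inferInstance] (fun ω => X ω i) :=
    fun i => ((measurable_pi_apply i).comp ((WithLp.measurable_ofLp _ _).comp hXm)).stronglyMeasurable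
  have k2 : ∀ i : Fin d, ∫ ω, X ω i * f (Y ω) i ∂μ = ∫ ω, X ω i * G ω i ∂μ := by
    intro i
    have h := condExp_mul_of_stronglyMeasurable_left (m := MeasurableSpace.comap X inferInstance)
      (hXsm i) (n2n_integrable_mul (hXc2 i) (hU2 i)) (hUi i)
    calc ∫ ω, X ω i * f (Y ω) i ∂μ
        = ∫ ω, (μ[(fun ω => X ω i) * (fun ω => f (Y ω) i) |
            MeasurableSpace.comap X inferInstance]) ω ∂μ :=
          (integral_condExp hX.comap_le).symm
      _ = ∫ ω, X ω i * G ω i ∂μ := by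
          refine integral_congr_ae (h.trans ?_)
          filter_upwards [hgU i] with ω hω
          simp only [Pi.mul_apply]
          rw [hω]
  have k3 : ∀ i : Fin d, ∫ ω, X ω i * Z ω i ∂μ = ∫ ω, X ω i * (X ω i + ε i) ∂μ := by
    intro i
    have h := condExp_mul_of_stronglyMeasurable_left (m := MeasurableSpace.comap X inferInstance)
      (hXsm i) (n2n_integrable_mul (hXc2 i) (hV2 i)) (hVi i)
    calc ∫ ω, X ω i * Z ω i ∂μ
        = ∫ ω, (μ[(fun ω => X ω i) * (fun ω => Z ω i) |
            MeasurableSpace.comap X inferInstance]) ω ∂μ :=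
          (integral_condExp hX.comap_le).symm
      _ = ∫ ω, X ω i * (X ω i + ε i) ∂μ := by
          refine integral_congr_ae (h.trans ?_)
          filter_upwards [hgZ i] with ω hω
          simp only [Pi.mul_apply]
          rw [hω]
  have eG : ∀ i : Fin d, ∫ ω, G ω i ∂μ = ∫ ω, f (Y ω) i ∂μ := by
    intro i
    calc ∫ ω, G ω i ∂μ
        = ∫ ω, (μ[(fun ω => f (Y ω) i) | MeasurableSpace.comap X inferInstance]) ω ∂μ :=
          (integral_congr_ae (hgU i)).symm
      _ = ∫ ω, f (Y ω) i ∂μ := integral_condExp hX.comap_le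
  -- the combined per-coordinate identity
  have kk : ∀ i : Fin d, ∫ ω, (f (Y ω) i - X ω i) * (Z ω i - X ω i) ∂μ
      = ε i * (∫ ω, f (Y ω) i ∂μ - ∫ ω, X ω i ∂μ) := by
    intro i
    have e1 : (fun ω => (f (Y ω) i - X ω i) * (Z ω i - X ω i))
        = fun ω => f (Y ω) i * Z ω i - X ω i * Z ω i - X ω i * f (Y ω) i
            + X ω i * X ω i := by
      funext ω; ring
    have iUV : Integrable (fun ω => f (Y ω) i * Z ω i) μ :=
      n2n_integrable_mul (hU2 i) (hV2 i)
    have iXV : Integrable (fun ω => X ω i * Z ω i) μ :=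
      n2n_integrable_mul (hXc2 i) (hV2 i)
    have iXU : Integrable (fun ω => X ω i * f (Y ω) i) μ :=
      n2n_integrable_mul (hXc2 i) (hU2 i)
    have iXX : Integrable (fun ω => X ω i * X ω i) μ :=
      n2n_integrable_mul (hXc2 i) (hXc2 i)
    have iGX : Integrable (fun ω => G ω i * X ω i) μ :=
      n2n_integrable_mul (hGc2 i) (hXc2 i)
    have iA' : Integrable (fun ω => f (Y ω) i * Z ω i - X ω i * Z ω i) μ := iUV.sub iXV
    have iA : Integrable
        (fun ω => f (Y ω) i * Z ω i - X ω i * Z ω i - X ω i * f (Y ω) i) μ := iA'.sub iXU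
    rw [e1, integral_add iA iXX, integral_sub iA' iXU,
      integral_sub iUV iXV, k1 i, k2 i, k3 i]
    have e2 : ∫ ω, G ω i * (X ω i + ε i) ∂μ
        = ∫ ω, G ω i * X ω i ∂μ + (∫ ω, G ω i ∂μ) * ε i := by
      simp_rw [mul_add]
      rw [integral_add iGX ((hGci i).mul_const (ε i)), integral_mul_const]
    have e3 : ∫ ω, X ω i * (X ω i + ε i) ∂μ
        = ∫ ω, X ω i * X ω i ∂μ + (∫ ω, X ω i ∂μ) * ε i := by
      simp_rw [mul_add]
      rw [integral_add iXX ((hXci i).mul_const (ε i)), integral_mul_const]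
    have e4 : ∫ ω, X ω i * G ω i ∂μ = ∫ ω, G ω i * X ω i ∂μ :=
      integral_congr_ae (Filter.Eventually.of_forall fun ω => mul_comm _ _)
    rw [e2, e3, e4, eG i]
    ring
  -- the key cross-term identity
  have hsubYX : MemLp (fun ω => f (Y ω) - X ω) 2 μ := hfY.sub hX2
  have hsubZX : MemLp (fun ω => Z ω - X ω) 2 μ := hZsq.sub hX2
  have hintYX : Integrable (fun ω => f (Y ω) - X ω) μ := hsubYX.integrable one_le_two
  have key : ∫ ω, ⟪f (Y ω) - X ω, Z ω - X ω⟫ ∂μ = ⟪ε, ∫ ω, (f (Y ω) - X ω) ∂μ⟫ := by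
    have lhs1 : ∫ ω, ⟪f (Y ω) - X ω, Z ω - X ω⟫ ∂μ
        = ∑ i : Fin d, ∫ ω, (f (Y ω) i - X ω i) * (Z ω i - X ω i) ∂μ := by
      rw [← integral_finset_sum]
      · refine integral_congr_ae (Filter.Eventually.of_forall fun ω => ?_)
        simp [PiLp.inner_apply, RCLike.inner_apply, PiLp.sub_apply]
        exact Finset.sum_congr rfl fun i _ => mul_comm _ _
      · exact fun i _ => n2n_integrable_mul ((hU2 i).sub (hXc2 i)) ((hV2 i).sub (hXc2 i))
    have coord : ∀ i : Fin d, (∫ ω, (f (Y ω) - X ω) ∂μ) i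
        = ∫ ω, f (Y ω) i ∂μ - ∫ ω, X ω i ∂μ := by
      intro i
      have h := (EuclideanSpace.proj (𝕜 := ℝ) i).integral_comp_comm hintYX
      have h' : ∫ ω, (f (Y ω) i - X ω i) ∂μ = (∫ ω, (f (Y ω) - X ω) ∂μ) i := by
        simpa [PiLp.sub_apply] using h
      rw [← h', integral_sub (hUi i) (hXci i)]
    have rhs1 : ⟪ε, ∫ ω, (f (Y ω) - X ω) ∂μ⟫
        = ∑ i : Fin d, ε i * ((∫ ω, (f (Y ω) - X ω) ∂μ) i) := by
      simp [PiLp.inner_apply, RCLike.inner_apply]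
      exact Finset.sum_congr rfl fun i _ => mul_comm _ _
    rw [lhs1, rhs1]
    exact Finset.sum_congr rfl fun i _ => by rw [kk i, coord i]
  -- assembling
  have intsq1 : Integrable (fun ω => ‖f (Y ω) - X ω‖ ^ 2) μ :=
    (memLp_two_iff_integrable_sq_norm hsubYX.1).mp hsubYX
  have intsq2 : Integrable (fun ω => ‖Z ω - X ω‖ ^ 2) μ :=
    (memLp_two_iff_integrable_sq_norm hsubZX.1).mp hsubZX
  have intInner : Integrable (fun ω => ⟪f (Y ω) - X ω, Z ω - X ω⟫) μ :=
    n2n_integrable_inner hsubYX hsubZX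
  have expand : ∫ ω, ‖f (Y ω) - Z ω‖ ^ 2 ∂μ
      = ∫ ω, ‖f (Y ω) - X ω‖ ^ 2 ∂μ - 2 * ∫ ω, ⟪f (Y ω) - X ω, Z ω - X ω⟫ ∂μ
        + ∫ ω, ‖Z ω - X ω‖ ^ 2 ∂μ := by
    have pt : (fun ω => ‖f (Y ω) - Z ω‖ ^ 2)
        = fun ω => ‖f (Y ω) - X ω‖ ^ 2 - 2 * ⟪f (Y ω) - X ω, Z ω - X ω⟫
            + ‖Z ω - X ω‖ ^ 2 := by
      funext ω
      rw [show f (Y ω) - Z ω = (f (Y ω) - X ω) - (Z ω - X ω) by abel]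
      exact norm_sub_sq_real _ _
    have iE0 : Integrable (fun ω => 2 * ⟪f (Y ω) - X ω, Z ω - X ω⟫) μ := intInner.const_mul 2
    have iE1 : Integrable
        (fun ω => ‖f (Y ω) - X ω‖ ^ 2 - 2 * ⟪f (Y ω) - X ω, Z ω - X ω⟫) μ := intsq1.sub iE0
    rw [pt, integral_add iE1 intsq2, integral_sub intsq1 iE0, integral_const_mul]
  rw [expand, ← key]
  ring
end

section
/- Let Y, Z : Ω → E be measurable random vectors on a probability space (Ω, μ) such that Y and Z are independent and Z is square-integrable with E[Z] = x for a fixed vector x ∈ E. Let f, g : E → E be measurable with f ∘ Y and g ∘ Y square-integrable. Then E[‖f(Y) − Z‖²] − E[‖g(Y) − Z‖²] = E[‖f(Y) − x‖²] − E[‖g(Y) − x‖²]. -/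
open MeasureTheory ProbabilityTheory

section Aux

variable {Ω : Type*} [MeasurableSpace Ω] {μ : Measure Ω} [IsProbabilityMeasure μ] {d : ℕ}

local notation "E" => EuclideanSpace ℝ (Fin d)

private lemma aux_integrable_inner (W V : Ω → E) (hW : MemLp W 2 μ) (hV : MemLp V 2 μ) :
    Integrable (fun ω => (inner ℝ (W ω) (V ω) : ℝ)) μ := by
  have h := L2.integrable_inner (𝕜 := ℝ) (hW.toLp W) (hV.toLp V)
  refine h.congr ?_
  filter_upwards [hW.coeFn_toLp, hV.coeFn_toLp] with ω h1 h2
  rw [h1, h2]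

private lemma aux_integrable_sq_norm (W : Ω → E) (hW : MemLp W 2 μ) :
    Integrable (fun ω => ‖W ω‖ ^ 2) μ :=
  (memLp_two_iff_integrable_sq_norm hW.aestronglyMeasurable).mp hW

private lemma aux_integral_inner_indep_s3 (W V : Ω → E) (hW : MemLp W 2 μ) (hV : MemLp V 2 μ)
    (hInd : IndepFun W V μ) :
    ∫ ω, (inner ℝ (W ω) (V ω) : ℝ) ∂μ
      = (inner ℝ (∫ ω, W ω ∂μ) (∫ ω, V ω ∂μ) : ℝ) := by
  have hWi : Integrable W μ := hW.integrable one_le_two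
  have hVi : Integrable V μ := hV.integrable one_le_two
  have hcoordW : ∀ i : Fin d, Integrable (fun ω => W ω i) μ := fun i =>
    ((EuclideanSpace.proj i (𝕜 := ℝ)).comp_memLp' hW).integrable one_le_two
  have hcoordV : ∀ i : Fin d, Integrable (fun ω => V ω i) μ := fun i =>
    ((EuclideanSpace.proj i (𝕜 := ℝ)).comp_memLp' hV).integrable one_le_two
  have hindc : ∀ i : Fin d, IndepFun (fun ω => W ω i) (fun ω => V ω i) μ := fun i =>
    hInd.comp (EuclideanSpace.proj (𝕜 := ℝ) i).continuous.measurable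
      (EuclideanSpace.proj (𝕜 := ℝ) i).continuous.measurable
  simp_rw [PiLp.inner_apply, RCLike.inner_apply, conj_trivial]
  rw [integral_finset_sum]
  · refine Finset.sum_congr rfl fun i _ => ?_
    rw [(hindc i).symm.integral_fun_mul_eq_mul_integral (hcoordV i).1 (hcoordW i).1]
    congr 1
    · exact (EuclideanSpace.proj i (𝕜 := ℝ)).integral_comp_comm hVi
    · exact (EuclideanSpace.proj i (𝕜 := ℝ)).integral_comp_comm hWi
    
  · intro i _
    exact ((hindc i).integrable_mul (hcoordW i) (hcoordV i)).congr
        (Filter.Eventually.of_forall fun ω => mul_comm _ _)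

private lemma aux_expand (W V : Ω → E) (hW : MemLp W 2 μ) (hV : MemLp V 2 μ) :
    ∫ ω, ‖W ω - V ω‖ ^ 2 ∂μ
      = (∫ ω, ‖W ω‖ ^ 2 ∂μ) - 2 * ∫ ω, (inner ℝ (W ω) (V ω) : ℝ) ∂μ
        + ∫ ω, ‖V ω‖ ^ 2 ∂μ := by
  have h1 : Integrable (fun ω => ‖W ω‖ ^ 2 - 2 * (inner ℝ (W ω) (V ω) : ℝ)) μ :=
    (aux_integrable_sq_norm W hW).sub ((aux_integrable_inner W V hW hV).const_mul 2)
  have h2 : Integrable (fun ω => 2 * (inner ℝ (W ω) (V ω) : ℝ)) μ :=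
    (aux_integrable_inner W V hW hV).const_mul 2
  simp_rw [norm_sub_sq_real]
  rw [integral_add h1 (aux_integrable_sq_norm V hV),
    integral_sub (aux_integrable_sq_norm W hW) h2, integral_const_mul]

end Aux

/-- **Denoiser comparison is the same under noisy and clean targets.**
If `Y` and `Z` are independent, `Z` square-integrable with `E[Z] = x`, and `f ∘ Y`,
`g ∘ Y` square-integrable, then
`E[‖f(Y) − Z‖²] − E[‖g(Y) − Z‖²] = E[‖f(Y) − x‖²] − E[‖g(Y) − x‖²]`. -/
theorem noise2noise_risk_difference
    {Ω : Type*} [MeasurableSpace Ω] (μ : Measure Ω) [IsProbabilityMeasure μ]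
    {d : ℕ} (Y Z : Ω → EuclideanSpace ℝ (Fin d)) (x : EuclideanSpace ℝ (Fin d))
    (hY : Measurable Y) (hZ : Measurable Z)
    (hInd : IndepFun Y Z μ)
    (hZsq : MemLp Z 2 μ) (hEZ : ∫ ω, Z ω ∂μ = x)
    (f g : EuclideanSpace ℝ (Fin d) → EuclideanSpace ℝ (Fin d))
    (hf : Measurable f) (hfY : MemLp (fun ω => f (Y ω)) 2 μ)
    (hg : Measurable g) (hgY : MemLp (fun ω => g (Y ω)) 2 μ) :
    (∫ ω, ‖f (Y ω) - Z ω‖ ^ 2 ∂μ) - ∫ ω, ‖g (Y ω) - Z ω‖ ^ 2 ∂μ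
      = (∫ ω, ‖f (Y ω) - x‖ ^ 2 ∂μ) - ∫ ω, ‖g (Y ω) - x‖ ^ 2 ∂μ := by
  have hxc : MemLp (fun _ : Ω => x) 2 μ := memLp_const x
  have hindf : IndepFun (fun ω => f (Y ω)) Z μ := hInd.comp hf measurable_id
  have hindg : IndepFun (fun ω => g (Y ω)) Z μ := hInd.comp hg measurable_id
  have hfint : Integrable (fun ω => f (Y ω)) μ := hfY.integrable one_le_two
  have hgint : Integrable (fun ω => g (Y ω)) μ := hgY.integrable one_le_two
  have hfx : ∫ ω, (inner ℝ (f (Y ω)) x : ℝ) ∂μ = inner ℝ (∫ ω, f (Y ω) ∂μ) x := by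
    have h : ∀ ω, (inner ℝ (f (Y ω)) x : ℝ) = inner ℝ x (f (Y ω)) := fun ω => real_inner_comm _ _
    simp_rw [h, integral_inner hfint x]
    exact real_inner_comm _ _
  have hgx : ∫ ω, (inner ℝ (g (Y ω)) x : ℝ) ∂μ = inner ℝ (∫ ω, g (Y ω) ∂μ) x := by
    have h : ∀ ω, (inner ℝ (g (Y ω)) x : ℝ) = inner ℝ x (g (Y ω)) := fun ω => real_inner_comm _ _
    simp_rw [h, integral_inner hgint x]
    exact real_inner_comm _ _
  rw [aux_expand _ _ hfY hZsq, aux_expand _ _ hgY hZsq,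
    aux_expand _ _ hfY hxc, aux_expand _ _ hgY hxc,
    aux_integral_inner_indep_s3 _ _ hfY hZsq hindf,
    aux_integral_inner_indep_s3 _ _ hgY hZsq hindg, hEZ, hfx, hgx]
  ring
end

section
/- Let Y, Z : Ω → E be measurable random vectors on a probability space (Ω, μ) such that Y and Z are independent and Z is square-integrable with E[Z] = x for a fixed vector x ∈ E. Let 𝓕 be a set of measurable functions f : E → E such that f ∘ Y is square-integrable for every f ∈ 𝓕, and let f₀ ∈ 𝓕. Then f₀ minimizes the noisy-target risk f ↦ E[‖f(Y) − Z‖²] over 𝓕 if and only if f₀ minimizes the clean-target (supervised) risk f ↦ E[‖f(Y) − x‖²] over 𝓕. -/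
open MeasureTheory ProbabilityTheory

lemma noise2noise_key
    {Ω : Type*} [MeasurableSpace Ω] (μ : Measure Ω) [IsProbabilityMeasure μ]
    {d : ℕ} (A B : Ω → EuclideanSpace ℝ (Fin d))
    (hA : Measurable A) (hB : Measurable B)
    (hInd : IndepFun A B μ)
    (hAsq : MemLp A 2 μ) (hBsq : MemLp B 2 μ)
    (hEB : ∫ ω, B ω ∂μ = 0) :
    ∫ ω, ‖A ω - B ω‖ ^ 2 ∂μ = (∫ ω, ‖A ω‖ ^ 2 ∂μ) + ∫ ω, ‖B ω‖ ^ 2 ∂μ := by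
  have hBe : ENNReal.ofReal (2:ℝ) = 2 := by norm_num
  -- coordinate independence and integrability
  have hAi : ∀ i : Fin d, Integrable (fun ω => A ω i) μ := fun i => by
    have : MemLp (fun ω => A ω i) 2 μ := by
      have := (EuclideanSpace.proj (𝕜 := ℝ) i).comp_memLp' hAsq
      exact this
    exact this.integrable (by norm_num)
  have hBi : ∀ i : Fin d, Integrable (fun ω => B ω i) μ := fun i => by
    have : MemLp (fun ω => B ω i) 2 μ := (EuclideanSpace.proj (𝕜 := ℝ) i).comp_memLp' hBsq
    exact this.integrable (by norm_num)
  have hIndi : ∀ i : Fin d, IndepFun (fun ω => A ω i) (fun ω => B ω i) μ := fun i => by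
    have hproj : Measurable (fun v : EuclideanSpace ℝ (Fin d) => v i) := by
      exact (EuclideanSpace.proj (𝕜 := ℝ) i).continuous.measurable
    exact hInd.comp hproj hproj
  have hmuli : ∀ i : Fin d, Integrable (fun ω => A ω i * B ω i) μ := fun i =>
    (hIndi i).integrable_mul (hAi i) (hBi i)
  -- E B_i = 0
  have hEBi : ∀ i : Fin d, ∫ ω, B ω i ∂μ = 0 := fun i => by
    have hBint : Integrable B μ := hBsq.integrable (by norm_num)
    have := (EuclideanSpace.proj (𝕜 := ℝ) i).integral_comp_comm hBint
    simpa [hEB] using this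
  -- cross term vanishes
  have hcross : ∫ ω, (inner ℝ (A ω) (B ω) : ℝ) ∂μ = 0 := by
    have h1 : ∀ ω, (inner ℝ (A ω) (B ω) : ℝ) = ∑ i, A ω i * B ω i := fun ω => by
      simp [PiLp.inner_apply, RCLike.inner_apply, mul_comm]
    simp_rw [h1]
    rw [integral_finset_sum _ (fun i _ => hmuli i)]
    refine Finset.sum_eq_zero fun i _ => ?_
    have h2 : ∫ ω, A ω i * B ω i ∂μ = (∫ ω, A ω i ∂μ) * ∫ ω, B ω i ∂μ :=
      (hIndi i).integral_fun_mul_eq_mul_integral (hAi i).1 (hBi i).1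
    rw [h2, hEBi i, mul_zero]
  have hcrossInt : Integrable (fun ω => (inner ℝ (A ω) (B ω) : ℝ)) μ := by
    have h1 : ∀ ω, (inner ℝ (A ω) (B ω) : ℝ) = ∑ i, A ω i * B ω i := fun ω => by
      simp [PiLp.inner_apply, RCLike.inner_apply, mul_comm]
    simp_rw [h1]
    exact integrable_finset_sum _ (fun i _ => hmuli i)
  have hAn : Integrable (fun ω => ‖A ω‖ ^ 2) μ := by
    have := hAsq.norm.integrable_sq
    simpa using this
  have hBn : Integrable (fun ω => ‖B ω‖ ^ 2) μ := by
    have := hBsq.norm.integrable_sq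
    simpa using this
  have hexp : ∀ ω, ‖A ω - B ω‖ ^ 2
      = ‖A ω‖ ^ 2 - 2 * (inner ℝ (A ω) (B ω) : ℝ) + ‖B ω‖ ^ 2 := fun ω => by
    rw [@norm_sub_sq_real (EuclideanSpace ℝ (Fin d))]
  simp_rw [hexp]
  have hmul : Integrable (fun ω => 2 * (inner ℝ (A ω) (B ω) : ℝ)) μ := hcrossInt.const_mul 2
  have hsub : Integrable (fun ω => ‖A ω‖ ^ 2 - 2 * (inner ℝ (A ω) (B ω) : ℝ)) μ := hAn.sub hmul
  rw [integral_add hsub hBn, integral_sub hAn hmul, integral_const_mul, hcross]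
  ring

/-- **Noise2Noise: minimizing against an unbiased noisy target is equivalent to
supervised training.**  If `Y` and `Z` are independent, `Z` square-integrable with
`E[Z] = x`, and `𝓕` is a family of measurable denoisers with square-integrable
outputs on `Y`, then `f₀ ∈ 𝓕` minimizes `f ↦ E[‖f(Y) − Z‖²]` over `𝓕` iff it
minimizes the supervised risk `f ↦ E[‖f(Y) − x‖²]` over `𝓕`. -/
theorem noise2noise_argmin_iff
    {Ω : Type*} [MeasurableSpace Ω] (μ : Measure Ω) [IsProbabilityMeasure μ]
    {d : ℕ} (Y Z : Ω → EuclideanSpace ℝ (Fin d)) (x : EuclideanSpace ℝ (Fin d))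
    (hY : Measurable Y) (hZ : Measurable Z)
    (hInd : IndepFun Y Z μ)
    (hZsq : MemLp Z 2 μ) (hEZ : ∫ ω, Z ω ∂μ = x)
    (𝓕 : Set (EuclideanSpace ℝ (Fin d) → EuclideanSpace ℝ (Fin d)))
    (h𝓕meas : ∀ f ∈ 𝓕, Measurable f)
    (h𝓕sq : ∀ f ∈ 𝓕, MemLp (fun ω => f (Y ω)) 2 μ)
    (f₀ : EuclideanSpace ℝ (Fin d) → EuclideanSpace ℝ (Fin d)) (hf₀ : f₀ ∈ 𝓕) :
    (∀ f ∈ 𝓕, ∫ ω, ‖f₀ (Y ω) - Z ω‖ ^ 2 ∂μ ≤ ∫ ω, ‖f (Y ω) - Z ω‖ ^ 2 ∂μ)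
      ↔ (∀ f ∈ 𝓕, ∫ ω, ‖f₀ (Y ω) - x‖ ^ 2 ∂μ ≤ ∫ ω, ‖f (Y ω) - x‖ ^ 2 ∂μ) := by
  have hZint : Integrable Z μ := hZsq.integrable (by norm_num)
  have key : ∀ f ∈ 𝓕, ∫ ω, ‖f (Y ω) - Z ω‖ ^ 2 ∂μ
      = (∫ ω, ‖f (Y ω) - x‖ ^ 2 ∂μ) + ∫ ω, ‖Z ω - x‖ ^ 2 ∂μ := by
    intro f hf
    have h := noise2noise_key μ (fun ω => f (Y ω) - x) (fun ω => Z ω - x)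
      (((h𝓕meas f hf).comp hY).sub measurable_const) (hZ.sub measurable_const)
      (hInd.comp (f := Y) (g := Z) ((h𝓕meas f hf).sub measurable_const)
        (measurable_id.sub measurable_const))
      ((h𝓕sq f hf).sub (memLp_const x)) (hZsq.sub (memLp_const x))
      (by rw [integral_sub hZint (integrable_const x)]; simp [hEZ])
    simpa [sub_sub_sub_cancel_right] using h
  constructor <;> intro h f hf
  · have := h f hf
    rw [key f hf, key f₀ hf₀] at this
    linarith
  · rw [key f hf, key f₀ hf₀]
    linarith [h f hf]
end
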